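/- Well-posedness of the Dirichlet-to-Neumann map in the rank-deficient case: under the hypotheses of the semidefinite Dirichlet theorem (σ real symmetric ⪰ 0 with σ(e) ≠ 0 for all edges, or the commuting complex case), the map Λ_{σ,0} g := (L_σ u)_B is independent of the choice of Dirichlet solution u (solutions differ by floppy modes) and is given by Λ_{σ,0} = L_{BB} − L_{BI}(L_{II})^† L_{IB}, where † denotes the Moore–Penrose pseudoinverse; equivalently Λ_{σ,0} = L_{BB} − L_{BI} Q (Qᵀ L_{II} Q)^{-1} Qᵀ L_{IB} for any real matrix Q with QᵀQ = I and R(Q) = R(L_{II}). -/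

import Mathlib

open Matrix

/-- The `d`-dimensional discrete gradient. -/
def dgrad {V E : Type*} {d : ℕ} {K : Type*} [Field K] (e1 e2 : E → V)
    (u : V → Fin d → K) : E → Fin d → K :=
  fun e => u (e1 e) - u (e2 e)

/-- The matrix-weighted graph Laplacian `L_σ = ∇ᵀ diag(σ) ∇` applied to `u`. -/
noncomputable def dlap {V E : Type*} [Fintype E] [DecidableEq V] {d : ℕ} {K : Type*}
    [Field K] (e1 e2 : E → V) (σ : E → Matrix (Fin d) (Fin d) K)
    (u : V → Fin d → K) : V → Fin d → K :=
  fun i => ∑ e, ((if e1 e = i then (1 : K) else 0) - (if e2 e = i then 1 else 0)) •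
    (σ e *ᵥ dgrad e1 e2 u e)

/-- Connectivity within a vertex set `S`. -/
def connWithin {V E : Type*} (e1 e2 : E → V) (S : Set V) : Prop :=
  ∀ i ∈ S, ∀ j ∈ S, Relation.ReflTransGen
    (fun a b => a ∈ S ∧ b ∈ S ∧ ∃ e, (e1 e = a ∧ e2 e = b) ∨ (e1 e = b ∧ e2 e = a)) i j

/-- The complex conductivity `σ = σ' + i σ''` built from its real and imaginary parts. -/
noncomputable def sigC {E : Type*} {d : ℕ} (σ' σ'' : E → Matrix (Fin d) (Fin d) ℝ) :
    E → Matrix (Fin d) (Fin d) ℂ :=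
  fun e => (σ' e).map (fun a => (a : ℂ)) + Complex.I • (σ'' e).map (fun a => (a : ℂ))

/-- The unit vector supported at vertex `q.1` in coordinate `q.2`. -/
def deltaVec {V : Type*} [DecidableEq V] {d : ℕ} (q : V × Fin d) : V → Fin d → ℂ :=
  fun v k => if v = q.1 ∧ k = q.2 then 1 else 0

/-- Block of the weighted-Laplacian matrix, with row indices in `P` and column
indices in `R` (subtypes of the vertex set). -/
noncomputable def lapBlock {V E : Type*} [Fintype E] [DecidableEq V] {d : ℕ}
    (e1 e2 : E → V) (σ : E → Matrix (Fin d) (Fin d) ℂ) (P R : V → Prop) :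
    Matrix ({v : V // P v} × Fin d) ({v : V // R v} × Fin d) ℂ :=
  fun p q => dlap e1 e2 σ (deltaVec (q.1.1, q.2)) p.1.1 p.2

section Aux
set_option linter.unusedSectionVars false

variable {V E : Type*} [Fintype V] [Fintype E] [DecidableEq V] {d : ℕ}
variable (e1 e2 : E → V)

def cf (e : E) (i : V) : ℂ := (if e1 e = i then 1 else 0) - (if e2 e = i then 1 else 0)

lemma dlap_apply (σ : E → Matrix (Fin d) (Fin d) ℂ) (u : V → Fin d → ℂ) (i : V) (k : Fin d) :
    dlap e1 e2 σ u i k = ∑ e, cf e1 e2 e i * (σ e *ᵥ dgrad e1 e2 u e) k := by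
  simp [dlap, cf, Finset.sum_apply, Pi.smul_apply, smul_eq_mul]

noncomputable def dlapL (σ : E → Matrix (Fin d) (Fin d) ℂ) (i : V) (k : Fin d) :
    (V → Fin d → ℂ) →ₗ[ℂ] ℂ where
  toFun u := dlap e1 e2 σ u i k
  map_add' u v := by
    simp only [dlap, dgrad, Finset.sum_apply, Pi.smul_apply, smul_eq_mul, mulVec, dotProduct,
      Pi.add_apply, Pi.sub_apply]
    rw [← Finset.sum_add_distrib]
    refine Finset.sum_congr rfl fun e _ => ?_
    rw [← mul_add, ← Finset.sum_add_distrib]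
    congr 1
    refine Finset.sum_congr rfl fun j _ => ?_
    ring
  map_smul' a u := by
    simp only [dlap, dgrad, Finset.sum_apply, Pi.smul_apply, smul_eq_mul, mulVec, dotProduct,
      Pi.sub_apply, RingHom.id_apply]
    rw [Finset.mul_sum]
    refine Finset.sum_congr rfl fun e _ => ?_
    have h : ∑ j, σ e k j * (a * u (e1 e) j - a * u (e2 e) j)
        = a * ∑ j, σ e k j * (u (e1 e) j - u (e2 e) j) := by
      rw [Finset.mul_sum]
      exact Finset.sum_congr rfl fun j _ => by ring
    rw [h]; ring

lemma dlap_sub (σ : E → Matrix (Fin d) (Fin d) ℂ) (u u' : V → Fin d → ℂ) (i : V) (k : Fin d) :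
    dlap e1 e2 σ (fun x => u x - u' x) i k = dlap e1 e2 σ u i k - dlap e1 e2 σ u' i k :=
  map_sub (dlapL e1 e2 σ i k) u u'

lemma dlap_eq_sum (σ : E → Matrix (Fin d) (Fin d) ℂ) (u : V → Fin d → ℂ) (i : V) (k : Fin d) :
    dlap e1 e2 σ u i k = ∑ q : V × Fin d, u q.1 q.2 * dlap e1 e2 σ (deltaVec q) i k := by
  have hu : u = ∑ q : V × Fin d, u q.1 q.2 • deltaVec q := by
    funext v j
    rw [Finset.sum_apply, Finset.sum_apply, Fintype.sum_prod_type]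
    rw [Finset.sum_eq_single v]
    · rw [Finset.sum_eq_single j]
      · simp [deltaVec]
      · intro b _ hb; simp [deltaVec, Ne.symm hb]
      · simp
    · intro b _ hb
      apply Finset.sum_eq_zero
      intro x _
      simp [deltaVec, Ne.symm hb]
    · simp
  calc dlap e1 e2 σ u i k = dlapL e1 e2 σ i k u := rfl
    _ = dlapL e1 e2 σ i k (∑ q : V × Fin d, u q.1 q.2 • deltaVec q) := by rw [← hu]
    _ = ∑ q : V × Fin d, u q.1 q.2 * dlapL e1 e2 σ i k (deltaVec q) := by
        rw [map_sum]
        exact Finset.sum_congr rfl fun q _ => by rw [_root_.map_smul, smul_eq_mul]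
    _ = _ := rfl

end Aux

section Bridge
open scoped ComplexOrder

noncomputable def cvec {d : ℕ} (v : Fin d → ℝ) : Fin d → ℂ := fun j => (v j : ℂ)

lemma cvec_decomp {d : ℕ} (x : Fin d → ℂ) :
    x = cvec (fun j => (x j).re) + Complex.I • cvec (fun j => (x j).im) := by
  funext j
  simp only [cvec, Pi.add_apply, Pi.smul_apply, smul_eq_mul]
  rw [mul_comm]
  exact (Complex.re_add_im _).symm

lemma mapC_mulVec {d : ℕ} (M : Matrix (Fin d) (Fin d) ℝ) (v : Fin d → ℝ) :
    M.map (fun a => (a : ℂ)) *ᵥ cvec v = cvec (M *ᵥ v) := by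
  funext i
  exact (RingHom.map_mulVec Complex.ofRealHom M v i).symm

lemma addIsmul_eq_zero {d : ℕ} {u w : Fin d → ℝ}
    (h : cvec u + Complex.I • cvec w = 0) : u = 0 ∧ w = 0 := by
  have h' : ∀ j, u j = 0 ∧ w j = 0 := by
    intro j
    have := congrFun h j
    simp only [cvec, Pi.add_apply, Pi.smul_apply, smul_eq_mul, Pi.zero_apply] at this
    constructor
    · have := congrArg Complex.re this; simpa using this
    · have := congrArg Complex.im this; simpa using this
  exact ⟨funext fun j => (h' j).1, funext fun j => (h' j).2⟩

lemma star_dot_self_zero {n : Type*} [Fintype n] {v : n → ℂ} (h : star v ⬝ᵥ v = 0) : v = 0 :=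
  dotProduct_star_self_eq_zero.mp h

lemma mapC_posSemidef {d : ℕ} {M : Matrix (Fin d) (Fin d) ℝ} (hM : M.PosSemidef) :
    (M.map (fun a => (a : ℂ))).PosSemidef := by
  obtain ⟨B, rfl⟩ : ∃ B : Matrix (Fin d) (Fin d) ℝ, M = Bᴴ * B := by
    classical
    open MatrixOrder in
    exact CStarAlgebra.nonneg_iff_eq_star_mul_self.mp hM.nonneg
  have h1 : (Bᴴ * B).map (fun a => (a : ℂ))
      = (B.map (fun a => (a : ℂ)))ᴴ * B.map (fun a => (a : ℂ)) := by
    rw [show (fun a : ℝ => (a : ℂ)) = ⇑Complex.ofRealHom from rfl, Matrix.map_mul]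
    congr 1
    rw [Matrix.conjTranspose_map]
    intro a
    simp [Complex.conj_ofReal]
  rw [h1]
  exact Matrix.posSemidef_conjTranspose_mul_self _

lemma im_quad_zero {d : ℕ} (S : Matrix (Fin d) (Fin d) ℝ) (hS : ∀ k l, S k l = S l k)
    (x : Fin d → ℂ) :
    (star x ⬝ᵥ (S.map (fun a => (a : ℂ)) *ᵥ x)).im = 0 := by
  have expand : (star x ⬝ᵥ (S.map (fun a => (a : ℂ)) *ᵥ x)).im
      = ∑ k, ∑ j, S k j * ((starRingEnd ℂ) (x k) * x j).im := by
    simp only [dotProduct, Matrix.mulVec, Matrix.map_apply, Pi.star_apply,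
      Complex.star_def, Finset.mul_sum, Complex.im_sum]
    refine Finset.sum_congr rfl fun k _ => Finset.sum_congr rfl fun j _ => ?_
    rw [show (starRingEnd ℂ) (x k) * ((S k j : ℂ) * x j)
        = (S k j : ℂ) * ((starRingEnd ℂ) (x k) * x j) by ring]
    exact Complex.im_ofReal_mul _ _
  rw [expand]
  have key : (∑ k, ∑ j, S k j * ((starRingEnd ℂ) (x k) * x j).im)
      = - ∑ k, ∑ j, S k j * ((starRingEnd ℂ) (x k) * x j).im := by
    conv_lhs => rw [Finset.sum_comm]
    rw [← Finset.sum_neg_distrib]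
    refine Finset.sum_congr rfl fun k _ => ?_
    rw [← Finset.sum_neg_distrib]
    refine Finset.sum_congr rfl fun j _ => ?_
    rw [hS j k]
    have : ((starRingEnd ℂ) (x j) * x k).im = -((starRingEnd ℂ) (x k) * x j).im := by
      simp [Complex.mul_im]; ring
    rw [this]; ring
  linarith [key]

end Bridge

section Energy
open scoped ComplexOrder
set_option linter.unusedSectionVars false

variable {V E : Type*} [Fintype V] [Fintype E] [DecidableEq V] {d : ℕ}
variable (e1 e2 : E → V)

lemma energy_identity (σ : E → Matrix (Fin d) (Fin d) ℂ) (u : V → Fin d → ℂ) :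
    ∑ i, ∑ k, (starRingEnd ℂ) (u i k) * dlap e1 e2 σ u i k
      = ∑ e, star (dgrad e1 e2 u e) ⬝ᵥ (σ e *ᵥ dgrad e1 e2 u e) := by
  have step1 : ∀ i k, (starRingEnd ℂ) (u i k) * dlap e1 e2 σ u i k
      = ∑ e, cf e1 e2 e i * (starRingEnd ℂ) (u i k) * (σ e *ᵥ dgrad e1 e2 u e) k := by
    intro i k
    rw [dlap_apply, Finset.mul_sum]
    exact Finset.sum_congr rfl fun e _ => by ring
  simp_rw [step1]
  set T : V → Fin d → E → ℂ := fun i k e => cf e1 e2 e i * (starRingEnd ℂ) (u i k) *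
      (σ e *ᵥ dgrad e1 e2 u e) k with hT
  have hswap : (∑ i, ∑ k, ∑ e, T i k e) = ∑ e, ∑ k, ∑ i, T i k e := by
    calc ∑ i, ∑ k, ∑ e, T i k e
        = ∑ i, ∑ e, ∑ k, T i k e :=
          Finset.sum_congr rfl fun i _ => Finset.sum_comm (f := fun k e => T i k e)
      _ = ∑ e, ∑ i, ∑ k, T i k e := Finset.sum_comm (f := fun i e => ∑ k, T i k e)
      _ = ∑ e, ∑ k, ∑ i, T i k e :=
          Finset.sum_congr rfl fun e _ => Finset.sum_comm (f := fun i k => T i k e)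
  rw [hswap]
  refine Finset.sum_congr rfl fun e _ => ?_
  rw [dotProduct]
  refine Finset.sum_congr rfl fun k _ => ?_
  rw [← Finset.sum_mul]
  congr 1
  have : ∑ i, cf e1 e2 e i * (starRingEnd ℂ) (u i k)
      = (starRingEnd ℂ) (u (e1 e) k) - (starRingEnd ℂ) (u (e2 e) k) := by
    simp [cf, sub_mul, ite_mul, one_mul, zero_mul, Finset.sum_sub_distrib, Finset.sum_ite_eq]
  rw [this]
  simp [dgrad, Pi.star_apply, Complex.star_def, Pi.sub_apply, map_sub]

variable (σ' σ'' : E → Matrix (Fin d) (Fin d) ℝ)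

lemma edges_zero (hσ' : ∀ e, (σ' e).PosSemidef) (hσ'' : ∀ e, (σ'' e).IsSymm)
    (hnull : ∀ e (v : Fin d → ℝ), σ' e *ᵥ v = 0 → σ'' e *ᵥ v = 0)
    (u : V → Fin d → ℂ)
    (h0 : ∑ i, ∑ k, (starRingEnd ℂ) (u i k) * dlap e1 e2 (sigC σ' σ'') u i k = 0) :
    ∀ e, (σ' e).map (fun a => (a : ℂ)) *ᵥ dgrad e1 e2 u e = 0 ∧
         (σ'' e).map (fun a => (a : ℂ)) *ᵥ dgrad e1 e2 u e = 0 := by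
  rw [energy_identity] at h0
  have hSsym' : ∀ e k l, σ' e k l = σ' e l k := by
    intro e k l
    have h := (hσ' e).isHermitian
    have := congrFun (congrFun h l) k
    simpa [Matrix.conjTranspose_apply] using this
  have hSsym'' : ∀ e k l, σ'' e k l = σ'' e l k := by
    intro e k l
    have h := hσ'' e
    rw [Matrix.IsSymm] at h
    have := congrFun (congrFun h l) k
    simpa using this
  set x : E → Fin d → ℂ := fun e => dgrad e1 e2 u e with hx
  have hterm : ∀ e, star (x e) ⬝ᵥ (sigC σ' σ'' e *ᵥ x e)
      = star (x e) ⬝ᵥ ((σ' e).map (fun a => (a : ℂ)) *ᵥ x e)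
        + Complex.I * (star (x e) ⬝ᵥ ((σ'' e).map (fun a => (a : ℂ)) *ᵥ x e)) := by
    intro e
    rw [sigC, Matrix.add_mulVec, Matrix.smul_mulVec, dotProduct_add,
      dotProduct_smul, smul_eq_mul]
  have hre : ∀ e, (star (x e) ⬝ᵥ (sigC σ' σ'' e *ᵥ x e)).re
      = (star (x e) ⬝ᵥ ((σ' e).map (fun a => (a : ℂ)) *ᵥ x e)).re := by
    intro e
    rw [hterm e, Complex.add_re, Complex.mul_re, Complex.I_re, Complex.I_im]
    rw [im_quad_zero (σ'' e) (hSsym'' e) (x e)]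
    ring
  have h0re := congrArg Complex.re h0
  rw [Complex.re_sum] at h0re
  have hz : ∀ e ∈ Finset.univ, (star (x e) ⬝ᵥ (sigC σ' σ'' e *ᵥ x e)).re = 0 := by
    refine (Finset.sum_eq_zero_iff_of_nonneg ?_).mp h0re
    intro e _
    rw [hre e]
    have := (mapC_posSemidef (hσ' e)).re_dotProduct_nonneg (x e)
    simpa using this
  have hq0 : ∀ e, (σ' e).map (fun a => (a : ℂ)) *ᵥ x e = 0 := by
    intro e
    refine ((mapC_posSemidef (hσ' e)).dotProduct_mulVec_zero_iff (x e)).mp ?_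
    have h1 : (star (x e) ⬝ᵥ ((σ' e).map (fun a => (a : ℂ)) *ᵥ x e)).re = 0 := by
      rw [← hre e]; exact hz e (Finset.mem_univ e)
    have h2 := im_quad_zero (σ' e) (hSsym' e) (x e)
    exact Complex.ext h1 h2
  intro e
  refine ⟨hq0 e, ?_⟩
  show ((σ'' e).map fun a => (a : ℂ)) *ᵥ x e = 0
  set a : Fin d → ℝ := fun j => (x e j).re
  set b : Fin d → ℝ := fun j => (x e j).im
  have hdec : x e = cvec a + Complex.I • cvec b := cvec_decomp (x e)
  have hq' : cvec (σ' e *ᵥ a) + Complex.I • cvec (σ' e *ᵥ b) = 0 := by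
    rw [← mapC_mulVec, ← mapC_mulVec, ← Matrix.mulVec_smul, ← Matrix.mulVec_add, ← hdec]
    exact hq0 e
  obtain ⟨ha, hb⟩ := addIsmul_eq_zero hq'
  have ha' := hnull e a ha
  have hb' := hnull e b hb
  rw [hdec, Matrix.mulVec_add, Matrix.mulVec_smul, mapC_mulVec, mapC_mulVec, ha', hb']
  funext j
  simp [cvec]

end Energy

section Floppy
set_option linter.unusedSectionVars false

variable {V E : Type*} [Fintype V] [Fintype E] [DecidableEq V] {d : ℕ}
variable (e1 e2 : E → V)
variable (σ' σ'' : E → Matrix (Fin d) (Fin d) ℝ)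

lemma floppy (hσ' : ∀ e, (σ' e).PosSemidef) (hσ'' : ∀ e, (σ'' e).IsSymm)
    (hnull : ∀ e (v : Fin d → ℝ), σ' e *ᵥ v = 0 → σ'' e *ᵥ v = 0)
    (Bd : V → Prop) [DecidablePred Bd] (v : V → Fin d → ℂ)
    (hbd : ∀ i, Bd i → v i = 0)
    (hin : ∀ i, ¬ Bd i → dlap e1 e2 (sigC σ' σ'') v i = 0) :
    ∀ e, (σ' e).map (fun a => (a : ℂ)) *ᵥ dgrad e1 e2 v e = 0 ∧
         (σ'' e).map (fun a => (a : ℂ)) *ᵥ dgrad e1 e2 v e = 0 := by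
  apply edges_zero e1 e2 σ' σ'' hσ' hσ'' hnull
  apply Finset.sum_eq_zero
  intro i _
  apply Finset.sum_eq_zero
  intro k _
  by_cases h : Bd i
  · rw [hbd i h]; simp
  · rw [hin i h]; simp

lemma realmap_mulVec_star {S : Matrix (Fin d) (Fin d) ℝ} {y : Fin d → ℂ}
    (hy : S.map (fun a => (a : ℂ)) *ᵥ y = 0) :
    S.map (fun a => (a : ℂ)) *ᵥ (star y) = 0 := by
  have h : S.map (fun a => (a : ℂ)) *ᵥ (star y) = star (S.map (fun a => (a : ℂ)) *ᵥ y) := by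
    funext k
    simp only [Matrix.mulVec, dotProduct, Matrix.map_apply, Pi.star_apply,
      Complex.star_def, map_sum]
    exact Finset.sum_congr rfl fun j _ => by
      rw [_root_.map_mul, Complex.conj_ofReal]
  rw [h, hy]
  simp

lemma floppy_dlap (hσ' : ∀ e, (σ' e).PosSemidef) (hσ'' : ∀ e, (σ'' e).IsSymm)
    (hnull : ∀ e (v : Fin d → ℝ), σ' e *ᵥ v = 0 → σ'' e *ᵥ v = 0)
    (Bd : V → Prop) [DecidablePred Bd] (v : V → Fin d → ℂ)
    (hbd : ∀ i, Bd i → v i = 0)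
    (hin : ∀ i, ¬ Bd i → dlap e1 e2 (sigC σ' σ'') v i = 0) :
    (∀ i k, dlap e1 e2 (sigC σ' σ'') v i k = 0) ∧
    (∀ i k, dlap e1 e2 (sigC σ' σ'') (fun x j => (starRingEnd ℂ) (v x j)) i k = 0) := by
  have hedge := floppy e1 e2 σ' σ'' hσ' hσ'' hnull Bd v hbd hin
  constructor
  · intro i k
    rw [dlap_apply]
    apply Finset.sum_eq_zero
    intro e _
    have h : sigC σ' σ'' e *ᵥ dgrad e1 e2 v e = 0 := by
      rw [sigC, Matrix.add_mulVec, Matrix.smul_mulVec, (hedge e).1, (hedge e).2]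
      simp
    rw [h]
    simp
  · intro i k
    rw [dlap_apply]
    apply Finset.sum_eq_zero
    intro e _
    have hg : dgrad e1 e2 (fun x j => (starRingEnd ℂ) (v x j)) e = star (dgrad e1 e2 v e) := by
      funext j
      simp [dgrad, Pi.sub_apply, Pi.star_apply, Complex.star_def, map_sub]
    have h : sigC σ' σ'' e *ᵥ dgrad e1 e2 (fun x j => (starRingEnd ℂ) (v x j)) e = 0 := by
      rw [hg, sigC, Matrix.add_mulVec, Matrix.smul_mulVec,
        realmap_mulVec_star (hedge e).1, realmap_mulVec_star (hedge e).2]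
      simp
    rw [h]
    simp

lemma dlap_split (σ : E → Matrix (Fin d) (Fin d) ℂ) (u : V → Fin d → ℂ)
    (Bd : V → Prop) [DecidablePred Bd] (P : V → Prop) (i : V) (hi : P i) (k : Fin d) :
    dlap e1 e2 σ u i k =
      (lapBlock e1 e2 σ P Bd *ᵥ fun q => u q.1.1 q.2) (⟨i, hi⟩, k) +
      (lapBlock e1 e2 σ P (fun v => ¬ Bd v) *ᵥ fun q => u q.1.1 q.2) (⟨i, hi⟩, k) := by
  rw [dlap_eq_sum, Fintype.sum_prod_type,
    ← Finset.sum_filter_add_sum_filter_not Finset.univ Bd]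
  congr 1
  · rw [Finset.sum_subtype (p := Bd) _ (by simp)]
    simp only [Matrix.mulVec, dotProduct, lapBlock, Fintype.sum_prod_type]
    exact Finset.sum_congr rfl fun v _ => Finset.sum_congr rfl fun k' _ => mul_comm _ _
  · rw [Finset.sum_subtype (p := fun v => ¬ Bd v) _ (by simp)]
    simp only [Matrix.mulVec, dotProduct, lapBlock, Fintype.sum_prod_type]
    exact Finset.sum_congr rfl fun v _ => Finset.sum_congr rfl fun k' _ => mul_comm _ _

end Floppy

section Blocks
set_option linter.unusedSectionVars false

variable {V E : Type*} [Fintype V] [Fintype E] [DecidableEq V] {d : ℕ}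
variable (e1 e2 : E → V)

lemma lapBlock_apply (σ : E → Matrix (Fin d) (Fin d) ℂ) (P R : V → Prop)
    (p : {v : V // P v} × Fin d) (q : {v : V // R v} × Fin d) :
    lapBlock e1 e2 σ P R p q = ∑ e, cf e1 e2 e p.1.1 * cf e1 e2 e q.1.1 * σ e p.2 q.2 := by
  simp only [lapBlock, dlap, dgrad, deltaVec, Matrix.mulVec, dotProduct,
    Finset.sum_apply, Pi.smul_apply, smul_eq_mul, Pi.sub_apply, cf]
  refine Finset.sum_congr rfl fun e _ => ?_
  have h : (∑ j, σ e p.2 j * ((if e1 e = q.1.1 ∧ j = q.2 then (1:ℂ) else 0)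
      - if e2 e = q.1.1 ∧ j = q.2 then 1 else 0))
      = ((if e1 e = q.1.1 then (1:ℂ) else 0) - if e2 e = q.1.1 then 1 else 0) * σ e p.2 q.2 := by
    rw [Finset.sum_eq_single q.2]
    · by_cases h1 : e1 e = q.1.1 <;> by_cases h2 : e2 e = q.1.1 <;> simp [h1, h2] <;> ring
    · intro b _ hb; simp [hb]
    · simp
  rw [h]
  ring

variable (σ' σ'' : E → Matrix (Fin d) (Fin d) ℝ)

lemma sigC_symm (hσ' : ∀ e, (σ' e).PosSemidef) (hσ'' : ∀ e, (σ'' e).IsSymm)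
    (e : E) (k l : Fin d) : sigC σ' σ'' e k l = sigC σ' σ'' e l k := by
  have h1 : σ' e k l = σ' e l k := by
    have h := (hσ' e).isHermitian
    have := congrFun (congrFun h l) k
    simpa [Matrix.conjTranspose_apply] using this
  have h2 : σ'' e k l = σ'' e l k := by
    have h := hσ'' e
    rw [Matrix.IsSymm] at h
    have := congrFun (congrFun h l) k
    simpa using this
  simp [sigC, Matrix.add_apply, Matrix.smul_apply, Matrix.map_apply, h1, h2]

lemma lapBlock_transpose (hσ' : ∀ e, (σ' e).PosSemidef) (hσ'' : ∀ e, (σ'' e).IsSymm)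
    (P : V → Prop) :
    (lapBlock e1 e2 (sigC σ' σ'') P P)ᵀ = lapBlock e1 e2 (sigC σ' σ'') P P := by
  ext p q
  rw [Matrix.transpose_apply, lapBlock_apply, lapBlock_apply]
  refine Finset.sum_congr rfl fun e _ => ?_
  rw [sigC_symm σ' σ'' hσ' hσ'' e q.2 p.2]
  ring

def vext (Bd : V → Prop) [DecidablePred Bd] (w : {v : V // ¬ Bd v} × Fin d → ℂ) :
    V → Fin d → ℂ :=
  fun v k => if h : Bd v then 0 else w (⟨v, h⟩, k)

lemma nullA_lemma (hσ' : ∀ e, (σ' e).PosSemidef) (hσ'' : ∀ e, (σ'' e).IsSymm)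
    (hnull : ∀ e (v : Fin d → ℝ), σ' e *ᵥ v = 0 → σ'' e *ᵥ v = 0)
    (Bd : V → Prop) [DecidablePred Bd] (w : {v : V // ¬ Bd v} × Fin d → ℂ)
    (hw : lapBlock e1 e2 (sigC σ' σ'') (fun v => ¬ Bd v) (fun v => ¬ Bd v) *ᵥ w = 0) :
    lapBlock e1 e2 (sigC σ' σ'') Bd (fun v => ¬ Bd v) *ᵥ w = 0 ∧
    lapBlock e1 e2 (sigC σ' σ'') (fun v => ¬ Bd v) (fun v => ¬ Bd v) *ᵥ (star w) = 0 := by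
  set v : V → Fin d → ℂ := vext Bd w with hv
  have h1 : (fun q : {v : V // Bd v} × Fin d => v q.1.1 q.2) = 0 := by
    funext q; simp [v, vext, q.1.2]
  have h2 : (fun q : {v : V // ¬ Bd v} × Fin d => v q.1.1 q.2) = w := by
    funext q; simp [v, vext, q.1.2]
  have hbd : ∀ i, Bd i → v i = 0 := by
    intro i h; funext k; simp [v, vext, h]
  have hin : ∀ i, ¬ Bd i → dlap e1 e2 (sigC σ' σ'') v i = 0 := by
    intro i h
    funext k
    rw [dlap_split e1 e2 _ v Bd (fun x => ¬ Bd x) i h k, h1, h2, Matrix.mulVec_zero, hw]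
    simp
  obtain ⟨hdl, hdl'⟩ := floppy_dlap e1 e2 σ' σ'' hσ' hσ'' hnull Bd v hbd hin
  constructor
  · funext p
    have hs := dlap_split e1 e2 (sigC σ' σ'') v Bd Bd p.1.1 p.1.2 p.2
    rw [h1, h2, Matrix.mulVec_zero, hdl p.1.1 p.2] at hs
    have : (0 : ℂ) = 0 + (lapBlock e1 e2 (sigC σ' σ'') Bd (fun v => ¬ Bd v) *ᵥ w) p := hs
    simpa using this.symm
  · funext p
    set cv : V → Fin d → ℂ := fun x j => (starRingEnd ℂ) (v x j) with hcv
    have h1' : (fun q : {v : V // Bd v} × Fin d => cv q.1.1 q.2) = 0 := by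
      funext q; simp [cv, v, vext, q.1.2]
    have h2' : (fun q : {v : V // ¬ Bd v} × Fin d => cv q.1.1 q.2) = star w := by
      funext q; simp [cv, v, vext, q.1.2, Pi.star_apply, Complex.star_def]
    have hs := dlap_split e1 e2 (sigC σ' σ'') cv Bd (fun x => ¬ Bd x) p.1.1 p.1.2 p.2
    rw [h1', h2', Matrix.mulVec_zero, hdl' p.1.1 p.2] at hs
    have : (0 : ℂ) = 0 + (lapBlock e1 e2 (sigC σ' σ'')
        (fun v => ¬ Bd v) (fun v => ¬ Bd v) *ᵥ star w) p := hs
    simpa using this.symm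

end Blocks

/-- **well-posedness of the DtN map in the rank-deficient case.**
Under the hypotheses of the semidefinite Dirichlet theorem (`σ = σ' + iσ''` with
`σ'(e)` symmetric `⪰ 0`, `σ(e) ≠ 0`, `σ''(e)` symmetric commuting with `σ'(e)`,
`N(σ'(e)) ⊆ N(σ''(e))`, connected graph with connected interior), for any real `Q`
with `QᵀQ = I` and `R(Q) = R(L_{II})`: the matrix `Qᵀ L_{II} Q` is invertible, the
boundary fluxes `(L_σ u)_B` are independent of the choice of Dirichlet solution `u`,
and `Λ_{σ,0} g = (L_{BB} − L_{BI} Q (Qᵀ L_{II} Q)⁻¹ Qᵀ L_{IB}) g`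
(equivalently, `Λ_{σ,0} = L_{BB} − L_{BI} (L_{II})† L_{IB}`). -/
theorem dtn_well_posed_rank_deficient {V E : Type*} [Fintype V] [Fintype E]
    [DecidableEq V] {d : ℕ} (e1 e2 : E → V)
    (Bd : V → Prop) [DecidablePred Bd] (hBne : ∃ i, Bd i)
    (hconn : connWithin e1 e2 Set.univ)
    (hconnI : connWithin e1 e2 {v | ¬ Bd v})
    (σ' σ'' : E → Matrix (Fin d) (Fin d) ℝ)
    (hσ' : ∀ e, (σ' e).PosSemidef) (hσ'' : ∀ e, (σ'' e).IsSymm)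
    (hcomm : ∀ e, σ' e * σ'' e = σ'' e * σ' e)
    (hnull : ∀ e (v : Fin d → ℝ), σ' e *ᵥ v = 0 → σ'' e *ᵥ v = 0)
    (hnz : ∀ e, sigC σ' σ'' e ≠ 0)
    {κ : Type*} [Fintype κ] [DecidableEq κ]
    (Q : Matrix ({v : V // ¬ Bd v} × Fin d) κ ℝ)
    (hQ1 : Qᵀ * Q = 1)
    (hQ2 : Set.range (fun y : κ → ℂ => Q.map (fun a => (a : ℂ)) *ᵥ y) =
      Set.range (fun y : {v : V // ¬ Bd v} × Fin d → ℂ =>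
        lapBlock e1 e2 (sigC σ' σ'') (fun v => ¬ Bd v) (fun v => ¬ Bd v) *ᵥ y)) :
    IsUnit ((Q.map (fun a => (a : ℂ)))ᵀ *
        lapBlock e1 e2 (sigC σ' σ'') (fun v => ¬ Bd v) (fun v => ¬ Bd v) *
        Q.map (fun a => (a : ℂ))) ∧
    (∀ (g u u' : V → Fin d → ℂ),
      ((∀ i, Bd i → u i = g i) ∧ (∀ i, ¬ Bd i → dlap e1 e2 (sigC σ' σ'') u i = 0)) →
      ((∀ i, Bd i → u' i = g i) ∧ (∀ i, ¬ Bd i → dlap e1 e2 (sigC σ' σ'') u' i = 0)) →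
      ∀ i, Bd i → dlap e1 e2 (sigC σ' σ'') u i = dlap e1 e2 (sigC σ' σ'') u' i) ∧
    (∀ (g u : V → Fin d → ℂ),
      ((∀ i, Bd i → u i = g i) ∧ (∀ i, ¬ Bd i → dlap e1 e2 (sigC σ' σ'') u i = 0)) →
      ∀ (j : {v : V // Bd v}) (k : Fin d),
        dlap e1 e2 (sigC σ' σ'') u j.1 k =
        ((lapBlock e1 e2 (sigC σ' σ'') Bd Bd -
            lapBlock e1 e2 (sigC σ' σ'') Bd (fun v => ¬ Bd v) *
              Q.map (fun a => (a : ℂ)) *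
              ((Q.map (fun a => (a : ℂ)))ᵀ *
                lapBlock e1 e2 (sigC σ' σ'') (fun v => ¬ Bd v) (fun v => ¬ Bd v) *
                Q.map (fun a => (a : ℂ)))⁻¹ *
              (Q.map (fun a => (a : ℂ)))ᵀ *
              lapBlock e1 e2 (sigC σ' σ'') (fun v => ¬ Bd v) Bd) *ᵥ
          (fun q => g q.1.1 q.2)) (j, k)) := by
  classical
  set A := lapBlock e1 e2 (sigC σ' σ'') (fun v => ¬ Bd v) (fun v => ¬ Bd v) with hA
  set Bm := lapBlock e1 e2 (sigC σ' σ'') Bd Bd with hBm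
  set Cm := lapBlock e1 e2 (sigC σ' σ'') Bd (fun v => ¬ Bd v) with hCm
  set Dm := lapBlock e1 e2 (sigC σ' σ'') (fun v => ¬ Bd v) Bd with hDm
  set Qc := Q.map (fun a => (a : ℂ)) with hQc
  set M := Qcᵀ * A * Qc with hM
  have hQc1 : Qcᵀ * Qc = 1 := by
    have h1 : (Qᵀ * Q).map (fun a => (a : ℂ)) = (1 : Matrix κ κ ℝ).map (fun a => (a : ℂ)) := by
      rw [hQ1]
    rw [show ((Qᵀ * Q).map fun a => (a : ℂ)) = Qcᵀ * Qc from by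
        rw [hQc, show (fun a : ℝ => (a : ℂ)) = ⇑Complex.ofRealHom from rfl, Matrix.map_mul,
          Matrix.transpose_map]] at h1
    rw [h1, Matrix.map_one _ Complex.ofReal_zero Complex.ofReal_one]
  have hQinj : ∀ t : κ → ℂ, Qc *ᵥ t = 0 → t = 0 := by
    intro t ht
    have h : (Qcᵀ * Qc) *ᵥ t = 0 := by rw [← Matrix.mulVec_mulVec, ht, Matrix.mulVec_zero]
    rwa [hQc1, Matrix.one_mulVec] at h
  have hrange := Set.ext_iff.mp hQ2
  have hmemA : ∀ z, (∃ s, A *ᵥ s = z) → (∃ t, Qc *ᵥ t = z) := fun z hz => (hrange z).mpr hz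
  have hmemQ : ∀ z, (∃ t, Qc *ᵥ t = z) → (∃ s, A *ᵥ s = z) := fun z hz => (hrange z).mp hz
  have hAsym : Aᵀ = A := by
    rw [hA]; exact lapBlock_transpose e1 e2 σ' σ'' hσ' hσ'' _
  have hMinj : ∀ y, M *ᵥ y = 0 → y = 0 := by
    intro y hy
    have h1 : Qcᵀ *ᵥ (A *ᵥ (Qc *ᵥ y)) = 0 := by
      rw [Matrix.mulVec_mulVec, Matrix.mulVec_mulVec]
      exact hy
    obtain ⟨t, ht⟩ := hmemA (A *ᵥ (Qc *ᵥ y)) ⟨Qc *ᵥ y, rfl⟩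
    have ht0 : t = 0 := by
      have h2 : (Qcᵀ * Qc) *ᵥ t = 0 := by rw [← Matrix.mulVec_mulVec, ht, h1]
      rwa [hQc1, Matrix.one_mulVec] at h2
    have hAz : A *ᵥ (Qc *ᵥ y) = 0 := by rw [← ht, ht0, Matrix.mulVec_zero]
    obtain ⟨s, hs⟩ := hmemQ (Qc *ᵥ y) ⟨y, rfl⟩
    have hstar := (nullA_lemma e1 e2 σ' σ'' hσ' hσ'' hnull Bd (Qc *ᵥ y) (hA ▸ hAz)).2
    have hstar' : A *ᵥ star (Qc *ᵥ y) = 0 := by rw [hA]; exact hstar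
    have hzz : star (Qc *ᵥ y) ⬝ᵥ (Qc *ᵥ y) = 0 := by
      nth_rewrite 2 [← hs]
      rw [Matrix.dotProduct_mulVec, ← Matrix.mulVec_transpose, hAsym, hstar',
        zero_dotProduct]
    exact hQinj y (star_dot_self_zero hzz)
  have hMunit : IsUnit M := by
    refine Matrix.mulVec_injective_iff_isUnit.mp ?_
    intro y y' h
    have := hMinj (y - y') (by rw [Matrix.mulVec_sub, h, sub_self])
    exact sub_eq_zero.mp this
  refine ⟨hMunit, ?_, ?_⟩
  · -- Part 2: well-posedness
    intro g u u' hu hu' i hi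
    set v : V → Fin d → ℂ := fun x => u x - u' x with hv
    have hbd : ∀ j, Bd j → v j = 0 := by
      intro j hj; funext k
      simp [hv, hu.1 j hj, hu'.1 j hj]
    have hin : ∀ j, ¬ Bd j → dlap e1 e2 (sigC σ' σ'') v j = 0 := by
      intro j hj; funext k
      rw [hv, dlap_sub, hu.2 j hj, hu'.2 j hj]
      simp
    obtain ⟨hdl, -⟩ := floppy_dlap e1 e2 σ' σ'' hσ' hσ'' hnull Bd v hbd hin
    funext k
    have h := hdl i k
    rw [hv, dlap_sub] at h
    exact sub_eq_zero.mp h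
  · -- Part 3: formula
    intro g u hu j k
    have huB : (fun q : {v : V // Bd v} × Fin d => u q.1.1 q.2)
        = (fun q : {v : V // Bd v} × Fin d => g q.1.1 q.2) := by
      funext q; rw [hu.1 q.1.1 q.1.2]
    set uI : {v : V // ¬ Bd v} × Fin d → ℂ := fun q => u q.1.1 q.2 with huI
    have hDA : ∀ p : {v : V // ¬ Bd v} × Fin d,
        (Dm *ᵥ fun q : {v : V // Bd v} × Fin d => u q.1.1 q.2) p + (A *ᵥ uI) p = 0 := by
      intro p
      calc (Dm *ᵥ fun q : {v : V // Bd v} × Fin d => u q.1.1 q.2) p + (A *ᵥ uI) p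
          = dlap e1 e2 (sigC σ' σ'') u p.1.1 p.2 :=
            (dlap_split e1 e2 (sigC σ' σ'') u Bd (fun x => ¬ Bd x) p.1.1 p.1.2 p.2).symm
        _ = 0 := by rw [hu.2 p.1.1 p.1.2]; rfl
    have hAuI : A *ᵥ uI = - (Dm *ᵥ fun q : {v : V // Bd v} × Fin d => u q.1.1 q.2) := by
      funext p
      simpa [Pi.neg_apply] using eq_neg_of_add_eq_zero_right (hDA p)
    set s : κ → ℂ := M⁻¹ *ᵥ (Qcᵀ *ᵥ (A *ᵥ uI)) with hs
    set w := uI - Qc *ᵥ s with hw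
    obtain ⟨t1, ht1⟩ := hmemA (A *ᵥ uI) ⟨uI, rfl⟩
    obtain ⟨t2, ht2⟩ := hmemA (A *ᵥ (Qc *ᵥ s)) ⟨Qc *ᵥ s, rfl⟩
    have hMdet := (Matrix.isUnit_iff_isUnit_det M).mp hMunit
    have hQAw : Qcᵀ *ᵥ (A *ᵥ w) = 0 := by
      rw [hw, Matrix.mulVec_sub, Matrix.mulVec_sub]
      have hABC : Qcᵀ *ᵥ (A *ᵥ (Qc *ᵥ s)) = M *ᵥ s := by
        rw [Matrix.mulVec_mulVec, Matrix.mulVec_mulVec, hM]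
      rw [hABC, hs, Matrix.mulVec_mulVec, Matrix.mulVec_mulVec,
        Matrix.mul_nonsing_inv _ hMdet, Matrix.one_mulVec, sub_self]
    have hAw : A *ᵥ w = 0 := by
      have h12 : A *ᵥ w = Qc *ᵥ (t1 - t2) := by
        rw [hw, Matrix.mulVec_sub, Matrix.mulVec_sub, ht1, ht2]
      have ht12 : t1 - t2 = 0 := by
        have h2 : (Qcᵀ * Qc) *ᵥ (t1 - t2) = 0 := by
          rw [← Matrix.mulVec_mulVec, ← h12, hQAw]
        rwa [hQc1, Matrix.one_mulVec] at h2
      rw [h12, ht12, Matrix.mulVec_zero]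
    have hCw : Cm *ᵥ w = 0 := by
      rw [hCm]
      exact (nullA_lemma e1 e2 σ' σ'' hσ' hσ'' hnull Bd w (hA ▸ hAw)).1
    have hCuI : Cm *ᵥ uI = Cm *ᵥ (Qc *ᵥ s) := by
      rw [hw, Matrix.mulVec_sub] at hCw
      exact sub_eq_zero.mp hCw
    rw [← huB, Matrix.sub_mulVec]
    have hchain : ((Cm * Qc * M⁻¹ * Qcᵀ * Dm) *ᵥ
          fun q : {v : V // Bd v} × Fin d => u q.1.1 q.2)
        = Cm *ᵥ (Qc *ᵥ (M⁻¹ *ᵥ (Qcᵀ *ᵥ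
            (Dm *ᵥ fun q : {v : V // Bd v} × Fin d => u q.1.1 q.2)))) := by
      rw [Matrix.mulVec_mulVec, Matrix.mulVec_mulVec, Matrix.mulVec_mulVec,
        Matrix.mulVec_mulVec]
    have hval : Qc *ᵥ (M⁻¹ *ᵥ (Qcᵀ *ᵥ
          (Dm *ᵥ fun q : {v : V // Bd v} × Fin d => u q.1.1 q.2))) = - (Qc *ᵥ s) := by
      have hD : (Dm *ᵥ fun q : {v : V // Bd v} × Fin d => u q.1.1 q.2) = - (A *ᵥ uI) := by
        rw [hAuI, neg_neg]
      rw [hD, Matrix.mulVec_neg, Matrix.mulVec_neg, Matrix.mulVec_neg, hs]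
    rw [hchain, hval, Matrix.mulVec_neg, ← hCuI, sub_neg_eq_add]
    exact dlap_split e1 e2 (sigC σ' σ'') u Bd Bd j.1 j.2 k
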